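/- Let δ > 0 and 0 < κ < 1/δ, and let P be an orthogonal projection matrix (P = P^T = P²). Then the block matrix M = [[ (1/(κ(1−κδ))) I + κ^{-1} P , −κ^{-1} P ], [ −κ^{-1} P , (κ^{-1} − δ) I ]] is positive semi-definite. -/

import Mathlib

open Matrix

private lemma psd_smul {n : Type*} [Fintype n] {M : Matrix n n ℝ} (hM : M.PosSemidef)
    {a : ℝ} (ha : 0 ≤ a) : (a • M).PosSemidef := by
  rw [posSemidef_iff_dotProduct_mulVec]
  refine ⟨?_, fun x => ?_⟩
  · unfold Matrix.IsHermitian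
    rw [conjTranspose_smul, hM.1]
    simp
  · have := (posSemidef_iff_dotProduct_mulVec.mp hM).2 x
    rw [Matrix.smul_mulVec, dotProduct_smul]
    exact mul_nonneg ha this

private lemma psd_proj {d : ℕ} {Q : Matrix (Fin d) (Fin d) ℝ} (hs : Q.IsSymm)
    (hi : Q * Q = Q) : Q.PosSemidef := by
  have hQH : Qᴴ = Q := by
    rw [conjTranspose_eq_transpose_of_trivial]; exact hs
  have : Q = Qᴴ * Q := by rw [hQH, hi]
  rw [this]
  exact posSemidef_conjTranspose_mul_self Q

private lemma psd_fromBlocks_diag {d : ℕ} {A D : Matrix (Fin d) (Fin d) ℝ}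
    (hA : A.PosSemidef) (hD : D.PosSemidef) :
    (fromBlocks A 0 0 D).PosSemidef := by
  rw [posSemidef_iff_dotProduct_mulVec]
  refine ⟨?_, fun x => ?_⟩
  · unfold Matrix.IsHermitian
    rw [fromBlocks_conjTranspose, hA.1, hD.1]
    simp
  · have h1 := (posSemidef_iff_dotProduct_mulVec.mp hA).2 (x ∘ Sum.inl)
    have h2 := (posSemidef_iff_dotProduct_mulVec.mp hD).2 (x ∘ Sum.inr)
    rw [fromBlocks_mulVec]
    simp only [zero_mulVec, add_zero, zero_add]
    have : star x ⬝ᵥ Sum.elim (A *ᵥ (x ∘ Sum.inl)) (D *ᵥ (x ∘ Sum.inr))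
        = star (x ∘ Sum.inl) ⬝ᵥ (A *ᵥ (x ∘ Sum.inl))
          + star (x ∘ Sum.inr) ⬝ᵥ (D *ᵥ (x ∘ Sum.inr)) := by
      simp [dotProduct, Fintype.sum_sum_type]
    rw [this]
    exact add_nonneg h1 h2

/-- The block matrix `Φ₁` in the proof of Lemma 6: for `δ > 0`, `0 < κ < 1/δ`
and an orthogonal projection matrix `P` (`P = Pᵀ = P²`), the block matrix
`[[ (1/(κ(1−κδ)))I + κ⁻¹P , −κ⁻¹P ], [ −κ⁻¹P , (κ⁻¹ − δ)I ]]`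
is positive semi-definite. -/
theorem stmt_12 {d : ℕ} (δ κ : ℝ) (hδ : 0 < δ) (hκ : 0 < κ) (hκδ : κ < 1 / δ)
    (P : Matrix (Fin d) (Fin d) ℝ) (hPsymm : P.IsSymm) (hPidem : P * P = P) :
    (Matrix.fromBlocks
      ((1 / (κ * (1 - κ * δ))) • (1 : Matrix (Fin d) (Fin d) ℝ) + κ⁻¹ • P)
      (-(κ⁻¹ • P))
      (-(κ⁻¹ • P))
      ((κ⁻¹ - δ) • (1 : Matrix (Fin d) (Fin d) ℝ))).PosSemidef := by
  have hκ0 : κ ≠ 0 := ne_of_gt hκ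
  have h1κδ : 0 < 1 - κ * δ := by
    have := (lt_div_iff₀ hδ).mp hκδ
    linarith
  set c : ℝ := 1 / (κ * (1 - κ * δ)) with hc
  set b : ℝ := κ⁻¹ with hb
  set e : ℝ := κ⁻¹ - δ with he
  have hcpos : 0 < c := by positivity
  have hbpos : 0 < b := by positivity
  have hepos : 0 < e := by
    rw [he, sub_pos, ← one_div, lt_div_iff₀ hκ]
    nlinarith
  have hce : c * e = b * b := by
    rw [hc, hb, he]
    field_simp
  have hPH : Pᴴ = P := by
    rw [conjTranspose_eq_transpose_of_trivial]; exact hPsymm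
  -- the decomposition
  set R : Matrix (Fin d ⊕ Fin d) (Fin d ⊕ Fin d) ℝ :=
    fromBlocks (b • P) (-(e • P)) 0 0 with hR
  have hRtR : Rᴴ * R = fromBlocks ((b*b) • P) (-((b*e) • P)) (-((b*e) • P)) ((e*e) • P) := by
    rw [hR, fromBlocks_conjTranspose, fromBlocks_multiply]
    simp only [conjTranspose_smul, conjTranspose_neg, conjTranspose_zero, hPH,
      Matrix.smul_mul, Matrix.mul_smul, hPidem, Matrix.neg_mul, Matrix.mul_neg,
      smul_smul, Matrix.mul_zero, Matrix.zero_mul, add_zero, zero_add, neg_neg,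
      smul_neg, star_trivial]
    rw [fromBlocks_inj]
    refine ⟨?_, ?_, ?_, ?_⟩ <;> match_scalars <;> try ring
  have hdecomp :
      (Matrix.fromBlocks
        (c • (1 : Matrix (Fin d) (Fin d) ℝ) + b • P)
        (-(b • P)) (-(b • P))
        (e • (1 : Matrix (Fin d) (Fin d) ℝ)))
      = fromBlocks (c • ((1 : Matrix (Fin d) (Fin d) ℝ) - P) + b • P) 0 0
          (e • ((1 : Matrix (Fin d) (Fin d) ℝ) - P)) + e⁻¹ • (Rᴴ * R) := by
    have he0 : e ≠ 0 := ne_of_gt hepos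
    have h1 : e⁻¹ * (b * b) = c := by
      rw [← hce, mul_comm c e, ← mul_assoc, inv_mul_cancel₀ he0, one_mul]
    have h2 : e⁻¹ * (b * e) = b := by field_simp
    have h3 : e⁻¹ * (e * e) = e := by field_simp
    rw [hRtR, fromBlocks_smul, fromBlocks_add, fromBlocks_inj]
    refine ⟨?_, ?_, ?_, ?_⟩
    · rw [smul_smul, h1, smul_sub]
      module
    · rw [smul_neg, smul_smul, h2, zero_add]
    · rw [smul_neg, smul_smul, h2, zero_add]
    · rw [smul_smul, h3, smul_sub]
      module
  have goal_eq : (Matrix.fromBlocks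
      ((1 / (κ * (1 - κ * δ))) • (1 : Matrix (Fin d) (Fin d) ℝ) + κ⁻¹ • P)
      (-(κ⁻¹ • P))
      (-(κ⁻¹ • P))
      ((κ⁻¹ - δ) • (1 : Matrix (Fin d) (Fin d) ℝ)))
      = (Matrix.fromBlocks
        (c • (1 : Matrix (Fin d) (Fin d) ℝ) + b • P)
        (-(b • P)) (-(b • P))
        (e • (1 : Matrix (Fin d) (Fin d) ℝ))) := rfl
  rw [goal_eq, hdecomp]
  have hIP : ((1 : Matrix (Fin d) (Fin d) ℝ) - P).PosSemidef := by
    apply psd_proj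
    · unfold Matrix.IsSymm
      rw [transpose_sub, transpose_one, hPsymm]
    · rw [sub_mul, one_mul, mul_sub, mul_one, hPidem]
      abel
  have hPpsd : P.PosSemidef := psd_proj hPsymm hPidem
  refine Matrix.PosSemidef.add (psd_fromBlocks_diag ?_ ?_) ?_
  · exact Matrix.PosSemidef.add (psd_smul hIP (le_of_lt hcpos)) (psd_smul hPpsd (le_of_lt hbpos))
  · exact psd_smul hIP (le_of_lt hepos)
  · exact psd_smul (posSemidef_conjTranspose_mul_self R) (le_of_lt (inv_pos.mpr hepos))
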